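/- Let μ ∈ ℂ with μ ≠ 0, and suppose the subgroup Γ_μ of SL(2,ℂ) generated by X and Y_μ is discrete. Let W ∈ SL(2,ℂ) be such that W = X·U·Y_μ·U⁻¹ for some U ∈ Γ_μ, or W = X·U·X⁻¹·U⁻¹ for some U ∈ Γ_μ. Then either tr(W) = 2 or |tr(W) − 2| ≥ 1. -/

import Mathlib

open Matrix Filter

noncomputable def X : Matrix.SpecialLinearGroup (Fin 2) ℂ :=
  ⟨!![1, 1; 0, 1], by simp [Matrix.det_fin_two_of]⟩

noncomputable def Y (μ : ℂ) : Matrix.SpecialLinearGroup (Fin 2) ℂ :=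
  ⟨!![1, 0; μ, 1], by simp [Matrix.det_fin_two_of]⟩

noncomputable instance : TopologicalSpace (Matrix.SpecialLinearGroup (Fin 2) ℂ) :=
  TopologicalSpace.induced ((↑) : Matrix.SpecialLinearGroup (Fin 2) ℂ → Matrix (Fin 2) (Fin 2) ℂ)
    inferInstance

section
variable (M : Matrix.SpecialLinearGroup (Fin 2) ℂ)

lemma Mdet : M.val 0 0 * M.val 1 1 - M.val 0 1 * M.val 1 0 = 1 := by
  have := M.prop; rwa [Matrix.det_fin_two] at this

lemma conj00 : ((M * X * M⁻¹ : Matrix.SpecialLinearGroup (Fin 2) ℂ) :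
    Matrix (Fin 2) (Fin 2) ℂ) 0 0 = 1 - M.val 0 0 * M.val 1 0 := by
  rw [Matrix.SpecialLinearGroup.coe_mul, Matrix.SpecialLinearGroup.coe_mul]
  simp [Matrix.SpecialLinearGroup.coe_inv, Matrix.adjugate_fin_two,
    Matrix.mul_apply, Fin.sum_univ_two, X]
  linear_combination Mdet M

lemma conj01 : ((M * X * M⁻¹ : Matrix.SpecialLinearGroup (Fin 2) ℂ) :
    Matrix (Fin 2) (Fin 2) ℂ) 0 1 = (M.val 0 0)^2 := by
  rw [Matrix.SpecialLinearGroup.coe_mul, Matrix.SpecialLinearGroup.coe_mul]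
  simp [Matrix.SpecialLinearGroup.coe_inv, Matrix.adjugate_fin_two,
    Matrix.mul_apply, Fin.sum_univ_two, X]
  ring

lemma conj10 : ((M * X * M⁻¹ : Matrix.SpecialLinearGroup (Fin 2) ℂ) :
    Matrix (Fin 2) (Fin 2) ℂ) 1 0 = -(M.val 1 0)^2 := by
  rw [Matrix.SpecialLinearGroup.coe_mul, Matrix.SpecialLinearGroup.coe_mul]
  simp [Matrix.SpecialLinearGroup.coe_inv, Matrix.adjugate_fin_two,
    Matrix.mul_apply, Fin.sum_univ_two, X]
  ring

lemma conj11 : ((M * X * M⁻¹ : Matrix.SpecialLinearGroup (Fin 2) ℂ) :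
    Matrix (Fin 2) (Fin 2) ℂ) 1 1 = 1 + M.val 0 0 * M.val 1 0 := by
  rw [Matrix.SpecialLinearGroup.coe_mul, Matrix.SpecialLinearGroup.coe_mul]
  simp [Matrix.SpecialLinearGroup.coe_inv, Matrix.adjugate_fin_two,
    Matrix.mul_apply, Fin.sum_univ_two, X]
  linear_combination Mdet M

end

lemma shimizu (Γ : Subgroup (Matrix.SpecialLinearGroup (Fin 2) ℂ))
    (hdisc : DiscreteTopology Γ) (hX : X ∈ Γ)
    (A : Matrix.SpecialLinearGroup (Fin 2) ℂ) (hA : A ∈ Γ)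
    (hc : (A : Matrix (Fin 2) (Fin 2) ℂ) 1 0 ≠ 0) :
    1 ≤ ‖(A : Matrix (Fin 2) (Fin 2) ℂ) 1 0‖ := by
  by_contra hlt
  push_neg at hlt
  -- the sequence Aₙ₊₁ = Aₙ X Aₙ⁻¹ inside Γ
  let g : ℕ → Γ := fun n => Nat.rec (motive := fun _ => Γ) (⟨A, hA⟩ : Γ)
    (fun _ p => p * ⟨X, hX⟩ * p⁻¹) n
  have hgs : ∀ n, g (n + 1) = g n * ⟨X, hX⟩ * (g n)⁻¹ := fun n => rfl
  let a : ℕ → ℂ := fun n => ((g n).val : Matrix (Fin 2) (Fin 2) ℂ) 0 0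
  let c : ℕ → ℂ := fun n => ((g n).val : Matrix (Fin 2) (Fin 2) ℂ) 1 0
  have hcoe : ∀ n, (g (n + 1)).val = (g n).val * X * ((g n).val)⁻¹ := by
    intro n; rw [hgs]; push_cast; rfl
  have hfull : ∀ n, ((g (n + 1)).val : Matrix (Fin 2) (Fin 2) ℂ) =
      !![1 - a n * c n, (a n) ^ 2; -(c n) ^ 2, 1 + a n * c n] := by
    intro n
    rw [Matrix.eta_fin_two (((g (n + 1)).val : Matrix (Fin 2) (Fin 2) ℂ)), hcoe n,
      conj00, conj01, conj10, conj11]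
  have haa : ∀ n, a (n + 1) = 1 - a n * c n := fun n => by
    show ((g (n+1)).val : Matrix (Fin 2) (Fin 2) ℂ) 0 0 = _
    rw [hfull n]; simp
  have hca : ∀ n, c (n + 1) = -(c n) ^ 2 := fun n => by
    show ((g (n+1)).val : Matrix (Fin 2) (Fin 2) ℂ) 1 0 = _
    rw [hfull n]; simp
  have hc0 : c 0 = (A : Matrix (Fin 2) (Fin 2) ℂ) 1 0 := rfl
  set r : ℝ := ‖c 0‖ with hrdef
  have hr0 : 0 ≤ r := norm_nonneg _
  have hr1 : r < 1 := by rw [hrdef, hc0]; exact hlt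
  have hcne : ∀ n, c n ≠ 0 := by
    intro n; induction n with
    | zero => rw [hc0]; exact hc
    | succ n ih => rw [hca]; exact neg_ne_zero.mpr (pow_ne_zero 2 ih)
  have hcb : ∀ n, ‖c n‖ ≤ r ^ (n + 1) := by
    intro n; induction n with
    | zero => simp [hrdef]
    | succ n ih =>
      rw [hca]
      calc ‖-(c n) ^ 2‖ = ‖c n‖ ^ 2 := by
            rw [norm_neg, norm_pow]
        _ ≤ (r ^ (n + 1)) ^ 2 := pow_le_pow_left₀ (norm_nonneg _) ih 2
        _ = r ^ (2 * (n + 1)) := by rw [← pow_mul, mul_comm]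
        _ ≤ r ^ (n + 2) := pow_le_pow_of_le_one hr0 hr1.le (by omega)
  set C : ℝ := max ‖a 0‖ (1 / (1 - r)) with hCdef
  have h1r : 0 < 1 - r := by linarith
  have hC1 : 1 / (1 - r) ≤ C := le_max_right _ _
  have hCpos : (0 : ℝ) ≤ C :=
    le_trans (norm_nonneg _) (le_max_left _ (1 / (1 - r)))
  have hCr : 1 + C * r ≤ C := by
    rw [div_le_iff₀ h1r] at hC1
    nlinarith
  have hcr : ∀ n, ‖c n‖ ≤ r := by
    intro n
    refine le_trans (hcb n) ?_
    calc r ^ (n + 1) ≤ r ^ 1 := pow_le_pow_of_le_one hr0 hr1.le (by omega)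
      _ = r := pow_one r
  have hab : ∀ n, ‖a n‖ ≤ C := by
    intro n; induction n with
    | zero => exact le_max_left _ _
    | succ n ih =>
      rw [haa]
      calc ‖1 - a n * c n‖
          ≤ ‖(1:ℂ)‖ + ‖a n * c n‖ := norm_sub_le _ _
        _ = 1 + ‖a n‖ * ‖c n‖ := by
            rw [norm_mul, norm_one]
        _ ≤ 1 + C * r := by
            have := mul_le_mul ih (hcr n) (norm_nonneg _) hCpos
            linarith
        _ ≤ C := hCr
  -- limits
  have hrpow : Tendsto (fun n : ℕ => r ^ (n + 1)) atTop (nhds 0) :=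
    (tendsto_pow_atTop_nhds_zero_of_lt_one hr0 hr1).comp (tendsto_add_atTop_nat 1)
  have hcz : Tendsto c atTop (nhds 0) := squeeze_zero_norm (fun n => hcb n) hrpow
  have hacz : Tendsto (fun n => a n * c n) atTop (nhds 0) := by
    have hlim : Tendsto (fun n : ℕ => C * r ^ (n + 1)) atTop (nhds 0) := by
      simpa using hrpow.const_mul C
    refine squeeze_zero_norm (fun n => ?_) hlim
    rw [norm_mul]
    exact mul_le_mul (hab n) (hcb n) (norm_nonneg _) hCpos
  have ha1 : Tendsto a atTop (nhds 1) := by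
    rw [← tendsto_add_atTop_iff_nat 1]
    have heq : (fun n => a (n + 1)) = fun n => 1 - a n * c n := funext haa
    rw [heq]
    simpa using tendsto_const_nhds.sub hacz
  -- matrix-level convergence
  have hmat : Tendsto (fun n => ((g n).val : Matrix (Fin 2) (Fin 2) ℂ)) atTop
      (nhds (X : Matrix (Fin 2) (Fin 2) ℂ)) := by
    rw [← tendsto_add_atTop_iff_nat 1]
    have heq : (fun n => ((g (n + 1)).val : Matrix (Fin 2) (Fin 2) ℂ)) =
        fun n => !![1 - a n * c n, (a n) ^ 2; -(c n) ^ 2, 1 + a n * c n] := funext hfull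
    rw [heq, show ((X : Matrix.SpecialLinearGroup (Fin 2) ℂ) : Matrix (Fin 2) (Fin 2) ℂ)
      = !![1, 1; 0, 1] from rfl]
    refine tendsto_pi_nhds.2 fun i => tendsto_pi_nhds.2 fun j => ?_
    fin_cases i <;> fin_cases j <;> simp only [Matrix.cons_val', Matrix.cons_val_zero,
      Matrix.cons_val_one, Matrix.head_cons, Matrix.empty_val', Matrix.cons_val_fin_one,
      Matrix.head_fin_const, Fin.isValue, Matrix.of_apply, Fin.zero_eta, Fin.mk_one]
    · simpa using tendsto_const_nhds.sub hacz
    · simpa using ha1.pow 2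
    · simpa using (hcz.pow 2).neg
    · simpa using tendsto_const_nhds.add hacz
  have hSL : Tendsto (fun n => (g n).val) atTop (nhds X) := by
    rw [nhds_induced]
    exact tendsto_comap_iff.mpr hmat
  have hG : Tendsto g atTop (nhds (⟨X, hX⟩ : Γ)) := by
    rw [tendsto_subtype_rng]
    exact hSL
  rw [nhds_discrete, tendsto_pure] at hG
  obtain ⟨n, hn⟩ := hG.exists
  have hzero : c n = 0 := by
    show ((g n).val : Matrix (Fin 2) (Fin 2) ℂ) 1 0 = 0
    rw [hn]
    show (!![(1 : ℂ), 1; 0, 1]) 1 0 = 0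
    simp
  exact hcne n hzero

lemma farey_aux (Γ : Subgroup (Matrix.SpecialLinearGroup (Fin 2) ℂ))
    (hdisc : DiscreteTopology Γ) (hX : X ∈ Γ)
    (P U W : Matrix.SpecialLinearGroup (Fin 2) ℂ) (hP : P ∈ Γ) (hU : U ∈ Γ)
    (htrP : Matrix.trace (P : Matrix (Fin 2) (Fin 2) ℂ) = 2)
    (hW : W = X * U * P * U⁻¹) :
    Matrix.trace (W : Matrix (Fin 2) (Fin 2) ℂ) = 2 ∨
      1 ≤ ‖Matrix.trace (W : Matrix (Fin 2) (Fin 2) ℂ) - 2‖ := by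
  set V : Matrix.SpecialLinearGroup (Fin 2) ℂ := U * P * U⁻¹ with hV
  have hVmem : V ∈ Γ := mul_mem (mul_mem hU hP) (inv_mem hU)
  have hWV : W = X * V := by rw [hW, hV]; group
  have htrV : V.val 0 0 + V.val 1 1 = 2 := by
    have h1 : Matrix.trace (V.val : Matrix (Fin 2) (Fin 2) ℂ) =
        Matrix.trace (P.val : Matrix (Fin 2) (Fin 2) ℂ) := by
      have h2 : (V.val : Matrix (Fin 2) (Fin 2) ℂ) =
          ((U * P).val : Matrix (Fin 2) (Fin 2) ℂ) * ((U⁻¹).val : Matrix (Fin 2) (Fin 2) ℂ) := by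
        rw [hV]; push_cast; rfl
      rw [h2, Matrix.trace_mul_comm]
      have h3 : ((U⁻¹).val : Matrix (Fin 2) (Fin 2) ℂ) * ((U * P).val : Matrix (Fin 2) (Fin 2) ℂ)
          = ((U⁻¹ * (U * P)).val : Matrix (Fin 2) (Fin 2) ℂ) := rfl
      rw [h3]
      congr 1
      group
    rw [← Matrix.trace_fin_two, h1, htrP]
  have htrW : Matrix.trace (W.val : Matrix (Fin 2) (Fin 2) ℂ) = 2 + V.val 1 0 := by
    rw [hWV]
    have hcm : ((X * V).val : Matrix (Fin 2) (Fin 2) ℂ) = (X.val) * (V.val) := rfl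
    rw [Matrix.trace_fin_two, hcm]
    simp [Matrix.mul_apply, Fin.sum_univ_two, X]
    linear_combination htrV
  by_cases hz : V.val 1 0 = 0
  · left; rw [htrW, hz, add_zero]
  · right
    rw [htrW, show (2 : ℂ) + V.val 1 0 - 2 = V.val 1 0 by ring]
    exact shimizu Γ hdisc hX V hVmem hz

/-- If Γ_μ is discrete and μ ≠ 0 and W has one of the two Farey forms with U ∈ Γ_μ, then
tr(W) = 2 or |tr(W) − 2| ≥ 1. -/
theorem farey_trace_bound (μ : ℂ) (hμ : μ ≠ 0)
    (hdisc : DiscreteTopology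
      (Subgroup.closure ({X, Y μ} : Set (Matrix.SpecialLinearGroup (Fin 2) ℂ))))
    (W : Matrix.SpecialLinearGroup (Fin 2) ℂ)
    (h : (∃ U ∈ Subgroup.closure ({X, Y μ} : Set (Matrix.SpecialLinearGroup (Fin 2) ℂ)),
            W = X * U * Y μ * U⁻¹) ∨
         (∃ U ∈ Subgroup.closure ({X, Y μ} : Set (Matrix.SpecialLinearGroup (Fin 2) ℂ)),
            W = X * U * X⁻¹ * U⁻¹)) :
    Matrix.trace (W : Matrix (Fin 2) (Fin 2) ℂ) = 2 ∨
      1 ≤ ‖Matrix.trace (W : Matrix (Fin 2) (Fin 2) ℂ) - 2‖ := by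
  have hXmem : X ∈ Subgroup.closure ({X, Y μ} : Set (Matrix.SpecialLinearGroup (Fin 2) ℂ)) :=
    Subgroup.subset_closure (Set.mem_insert _ _)
  have hYmem : Y μ ∈ Subgroup.closure ({X, Y μ} : Set (Matrix.SpecialLinearGroup (Fin 2) ℂ)) :=
    Subgroup.subset_closure (Set.mem_insert_of_mem _ rfl)
  have htrX : Matrix.trace (((X⁻¹ : Matrix.SpecialLinearGroup (Fin 2) ℂ)) :
      Matrix (Fin 2) (Fin 2) ℂ) = 2 := by
    rw [Matrix.trace_fin_two, Matrix.SpecialLinearGroup.coe_inv, Matrix.adjugate_fin_two]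
    show (!![(1:ℂ),1;0,1]) 1 1 + (!![(1:ℂ),1;0,1]) 0 0 = 2
    norm_num
  have htrY : Matrix.trace ((Y μ : Matrix.SpecialLinearGroup (Fin 2) ℂ) :
      Matrix (Fin 2) (Fin 2) ℂ) = 2 := by
    rw [Matrix.trace_fin_two]
    show (!![(1:ℂ),0;μ,1]) 0 0 + (!![(1:ℂ),0;μ,1]) 1 1 = 2
    norm_num
  rcases h with ⟨U, hU, hW⟩ | ⟨U, hU, hW⟩
  · exact farey_aux _ hdisc hXmem (Y μ) U W hYmem hU htrY (by rw [hW])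
  · exact farey_aux _ hdisc hXmem X⁻¹ U W (inv_mem hXmem) hU htrX (by rw [hW])
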